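/- arXiv:2102.12714 — 7 statements merged into one kernel-verified Lean document; each statement's English description precedes it below -/
import Mathlib

section
/- Let c ≥ 0 be such that g(c) = 0, and let Z_c = {y ∈ ℝ^n : y ≥ 0 entrywise, Σ_i y_i = c}. Then f_α maps Z_c into Z_c: for every y ∈ Z_c, f_α(y) ≥ 0 entrywise and Σ_i (f_α(y))_i = c. -/
open Finset

/-- If `c ≥ 0` and `g(c) = 0`, then `f_α` maps
`Z_c = {y : y ≥ 0, ∑ᵢ yᵢ = c}` into itself. -/
theorem mlpr_f_maps_Zc
    (n m : ℕ) (hn : 1 ≤ n) (hm : 2 ≤ m)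
    (R : Matrix (Fin n) ((Fin m → Fin n)) ℝ)
    (hR : ∀ i j, 0 ≤ R i j)
    (hRcol : ∀ j, ∑ i, R i j = 1)
    (v : Fin n → ℝ) (hv : ∀ i, 0 ≤ v i) (hv1 : ∑ i, v i = 1)
    (α : ℝ) (hα0 : 0 < α) (hα1 : α < 1)
    (c : ℝ) (hc : 0 ≤ c) (hgc : α * c ^ m - c + (1 - α) = 0)
    (y : Fin n → ℝ) (hy : ∀ i, 0 ≤ y i) (hyc : ∑ i, y i = c) :
    (∀ i, 0 ≤ α * (∑ j, R i j * ∏ p, y (j p)) + (1 - α) * v i) ∧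
    (∑ i, (α * (∑ j, R i j * ∏ p, y (j p)) + (1 - α) * v i)) = c := by
  constructor
  · intro i
    have h1 : 0 ≤ ∑ j, R i j * ∏ p, y (j p) :=
      Finset.sum_nonneg fun j _ => mul_nonneg (hR i j) (Finset.prod_nonneg fun p _ => hy _)
    have := hv i
    nlinarith
  · have key : ∑ j : Fin m → Fin n, ∏ p, y (j p) = c ^ m := by
      rw [← hyc, ← Fin.prod_const m (∑ i, y i), Finset.prod_univ_sum, Fintype.piFinset_univ]
    rw [Finset.sum_add_distrib, ← Finset.mul_sum, ← Finset.mul_sum, hv1,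
      Finset.sum_comm]
    simp_rw [← Finset.sum_mul, hRcol, one_mul, key]
    linarith
end

section
/- Define the sequence x_0 = 0 and x_{k+1} = f_α(x_k) for k = 0,1,2,…. Then the sequence (x_k) converges to a limit x_∞ ∈ ℝ^n which satisfies x_∞ = f_α(x_∞), x_∞ ≥ 0 entrywise, and x_∞ ≤ y entrywise for every nonnegative solution y of y = f_α(y); i.e., x_∞ is the minimal nonnegative solution of the multilinear PageRank equation. -/
open Finset

/-- The fixed-point sequence `x₀ = 0`, `x_{k+1} = f_α(x_k)` converges to a
limit `x_∞` which is a nonnegative solution of the multilinear PageRank equation and is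
entrywise below every nonnegative solution: the minimal nonnegative solution. -/
theorem mlpr_minimal_solution
    (n m : ℕ) (hn : 1 ≤ n) (hm : 2 ≤ m)
    (R : Matrix (Fin n) ((Fin m → Fin n)) ℝ)
    (hR : ∀ i j, 0 ≤ R i j)
    (hRcol : ∀ j, ∑ i, R i j = 1)
    (v : Fin n → ℝ) (hv : ∀ i, 0 ≤ v i) (hv1 : ∑ i, v i = 1)
    (α : ℝ) (hα0 : 0 < α) (hα1 : α < 1)
    (x : ℕ → Fin n → ℝ)
    (hx0 : ∀ i, x 0 i = 0)
    (hxk : ∀ k i, x (k + 1) i = α * (∑ j, R i j * ∏ p, x k (j p)) + (1 - α) * v i) :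
    ∃ xlim : Fin n → ℝ,
      Filter.Tendsto x Filter.atTop (nhds xlim) ∧
      (∀ i, 0 ≤ xlim i) ∧
      (∀ i, xlim i = α * (∑ j, R i j * ∏ p, xlim (j p)) + (1 - α) * v i) ∧
      (∀ y : Fin n → ℝ, (∀ i, 0 ≤ y i) →
        (∀ i, y i = α * (∑ j, R i j * ∏ p, y (j p)) + (1 - α) * v i) →
        ∀ i, xlim i ≤ y i) := by
  have hα0' : (0:ℝ) ≤ α := hα0.le
  have h1α : (0:ℝ) ≤ 1 - α := by linarith
  set f : (Fin n → ℝ) → (Fin n → ℝ) :=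
    fun a i => α * (∑ j, R i j * ∏ p, a (j p)) + (1 - α) * v i with hf
  have hxf : ∀ k, x (k + 1) = f (x k) := fun k => funext fun i => hxk k i
  -- f is monotone on nonnegative vectors
  have hmono : ∀ a b : Fin n → ℝ, (∀ i, 0 ≤ a i) → (∀ i, a i ≤ b i) →
      ∀ i, f a i ≤ f b i := by
    intro a b ha hab i
    have hprod : ∀ j : Fin m → Fin n, (∏ p, a (j p)) ≤ ∏ p, b (j p) := fun j =>
      Finset.prod_le_prod (fun p _ => ha _) (fun p _ => hab _)
    have hsum : (∑ j, R i j * ∏ p, a (j p)) ≤ ∑ j, R i j * ∏ p, b (j p) :=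
      Finset.sum_le_sum fun j _ => mul_le_mul_of_nonneg_left (hprod j) (hR i j)
    have := mul_le_mul_of_nonneg_left hsum hα0'
    simp only [f]
    linarith
  -- f preserves nonnegativity
  have hfnn : ∀ a : Fin n → ℝ, (∀ i, 0 ≤ a i) → ∀ i, 0 ≤ f a i := by
    intro a ha i
    have h1 : (0:ℝ) ≤ ∑ j, R i j * ∏ p, a (j p) :=
      Finset.sum_nonneg fun j _ =>
        mul_nonneg (hR i j) (Finset.prod_nonneg fun p _ => ha _)
    have h2 : (0:ℝ) ≤ (1 - α) * v i := mul_nonneg h1α (hv i)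
    simp only [f]
    nlinarith
  -- nonnegativity of iterates
  have hxnn : ∀ k i, 0 ≤ x k i := by
    intro k
    induction k with
    | zero => intro i; rw [hx0]
    | succ k ih => intro i; rw [hxf]; exact hfnn _ ih i
  -- sum bound: ∑ x k ≤ 1
  have hsum1 : ∀ k, ∑ i, x k i ≤ 1 := by
    intro k
    induction k with
    | zero => simp [hx0]
    | succ k ih =>
      have hSnn : (0:ℝ) ≤ ∑ i, x k i := Finset.sum_nonneg fun i _ => hxnn k i
      have key : (∑ j : Fin m → Fin n, ∏ p, x k (j p)) = (∑ i, x k i) ^ m := by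
        rw [← Fintype.piFinset_univ, ← Finset.prod_univ_sum]
        simp [Finset.prod_const]
      calc ∑ i, x (k+1) i
          = α * (∑ j : Fin m → Fin n, ∏ p, x k (j p)) + (1 - α) := by
            simp only [hxk, Finset.sum_add_distrib, ← Finset.mul_sum]
            rw [Finset.sum_comm]
            simp only [← Finset.sum_mul, hRcol, one_mul, hv1, mul_one]
        _ = α * (∑ i, x k i) ^ m + (1 - α) := by rw [key]
        _ ≤ α * 1 + (1 - α) := by
            have hp : (∑ i, x k i) ^ m ≤ 1 := pow_le_one₀ hSnn ih
            nlinarith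
        _ = 1 := by ring
  -- entrywise bound
  have hxb : ∀ k i, x k i ≤ 1 := by
    intro k i
    calc x k i ≤ ∑ i', x k i' :=
          Finset.single_le_sum (fun i' _ => hxnn k i') (Finset.mem_univ i)
      _ ≤ 1 := hsum1 k
  -- monotone in k
  have hstep : ∀ k i, x k i ≤ x (k + 1) i := by
    intro k
    induction k with
    | zero => intro i; rw [hx0]; exact hxnn 1 i
    | succ k ih =>
      intro i
      rw [hxf, hxf]
      exact hmono _ _ (hxnn k) ih i
  have hmonok : ∀ i, Monotone fun k => x k i := fun i =>
    monotone_nat_of_le_succ fun k => hstep k i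
  have hbdd : ∀ i, BddAbove (Set.range fun k => x k i) := fun i =>
    ⟨1, by rintro _ ⟨k, rfl⟩; exact hxb k i⟩
  set xlim : Fin n → ℝ := fun i => ⨆ k, x k i with hxlim
  have hcoord : ∀ i, Filter.Tendsto (fun k => x k i) Filter.atTop (nhds (xlim i)) :=
    fun i => tendsto_atTop_ciSup (hmonok i) (hbdd i)
  have htend : Filter.Tendsto x Filter.atTop (nhds xlim) :=
    tendsto_pi_nhds.mpr hcoord
  refine ⟨xlim, htend, ?_, ?_, ?_⟩
  · intro i
    exact le_ciSup_of_le (hbdd i) 0 (by rw [hx0])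
  · intro i
    have hc : Continuous fun a : Fin n → ℝ =>
        α * (∑ j, R i j * ∏ p, a (j p)) + (1 - α) * v i := by
      apply Continuous.add _ continuous_const
      apply Continuous.mul continuous_const
      apply continuous_finset_sum
      intro j _
      exact (continuous_const.mul (continuous_finset_prod _ fun p _ =>
        continuous_apply (j p)))
    have h2 : Filter.Tendsto (fun k => α * (∑ j, R i j * ∏ p, x k (j p)) + (1 - α) * v i)
        Filter.atTop (nhds (α * (∑ j, R i j * ∏ p, xlim (j p)) + (1 - α) * v i)) :=
      (hc.tendsto xlim).comp htend
    have h1 : Filter.Tendsto (fun k => x (k + 1) i) Filter.atTop (nhds (xlim i)) :=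
      (hcoord i).comp (Filter.tendsto_add_atTop_nat 1)
    have h1' : Filter.Tendsto
        (fun k => α * (∑ j, R i j * ∏ p, x k (j p)) + (1 - α) * v i)
        Filter.atTop (nhds (xlim i)) := by
      refine h1.congr fun k => ?_
      rw [hxk]
    exact (tendsto_nhds_unique h1' h2)
  · intro y hy hyfix i
    have hle : ∀ k i', x k i' ≤ y i' := by
      intro k
      induction k with
      | zero => intro i'; rw [hx0]; exact hy i'
      | succ k ih =>
        intro i'
        have hyf : f y = y := funext fun i'' => (hyfix i'').symm
        rw [hxf]
        calc f (x k) i' ≤ f y i' := hmono (x k) y (hxnn k) ih i'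
          _ = y i' := by rw [hyf]
    exact ciSup_le fun k => hle k i
end

section
/- Let s be the smallest positive root of g (so s = min(1, c_α), where c_α is the positive root of g other than 1, with c_α = 1 when α = 1/m). Then the multilinear PageRank equation x = f_α(x) has exactly one nonnegative solution x with Σ_i x_i = s: if y₁ and y₂ are nonnegative solutions with Σ_i (y₁)_i = Σ_i (y₂)_i = s, then y₁ = y₂, and such a solution exists. -/
open Finset

/-- Let `s` be the smallest positive root of `g`. Then the multilinear
PageRank equation has exactly one nonnegative solution with entry sum `s`: such a
solution exists, and any two nonnegative solutions with entry sum `s` coincide. -/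
theorem mlpr_unique_minimal_sum_solution
    (n m : ℕ) (hn : 1 ≤ n) (hm : 2 ≤ m)
    (R : Matrix (Fin n) ((Fin m → Fin n)) ℝ)
    (hR : ∀ i j, 0 ≤ R i j)
    (hRcol : ∀ j, ∑ i, R i j = 1)
    (v : Fin n → ℝ) (hv : ∀ i, 0 ≤ v i) (hv1 : ∑ i, v i = 1)
    (α : ℝ) (hα0 : 0 < α) (hα1 : α < 1)
    (s : ℝ) (hs0 : 0 < s) (hgs : α * s ^ m - s + (1 - α) = 0)
    (hsmin : ∀ z : ℝ, 0 < z → α * z ^ m - z + (1 - α) = 0 → s ≤ z) :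
    ∃! x : Fin n → ℝ, (∀ i, 0 ≤ x i) ∧ (∑ i, x i = s) ∧
      (∀ i, x i = α * (∑ j, R i j * ∏ p, x (j p)) + (1 - α) * v i) := by
  classical
  -- the PageRank map
  let F : (Fin n → ℝ) → (Fin n → ℝ) :=
    fun y i => α * (∑ j, R i j * ∏ p, y (j p)) + (1 - α) * v i
  have hFdef : ∀ y i, F y i = α * (∑ j, R i j * ∏ p, y (j p)) + (1 - α) * v i :=
    fun _ _ => rfl
  -- key identity : sum over all tuples of products = (sum)^m
  have key : ∀ y : Fin n → ℝ, (∑ j : Fin m → Fin n, ∏ p, y (j p)) = (∑ i, y i) ^ m := by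
    intro y
    have h := Finset.prod_univ_sum (fun _ : Fin m => (Finset.univ : Finset (Fin n)))
      (fun _ j => y j)
    simp only [Finset.prod_const, Finset.card_univ, Fintype.card_fin,
      Fintype.piFinset_univ] at h
    exact h.symm
  -- sum of F y
  have Fsum : ∀ y : Fin n → ℝ, (∑ i, F y i) = α * (∑ i, y i) ^ m + (1 - α) := by
    intro y
    simp only [hFdef]
    rw [Finset.sum_add_distrib, ← Finset.mul_sum, ← Finset.mul_sum, hv1, mul_one]
    congr 1
    rw [Finset.sum_comm, ← key y]
    refine congrArg (α * ·) (Finset.sum_congr rfl fun j _ => ?_)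
    rw [← Finset.sum_mul, hRcol, one_mul]
  -- monotonicity
  have Fmono : ∀ x y : Fin n → ℝ, (∀ i, 0 ≤ x i) → (∀ i, x i ≤ y i) →
      ∀ i, F x i ≤ F y i := by
    intro x y hx hxy i
    have h1 : (∑ j, R i j * ∏ p, x (j p)) ≤ ∑ j, R i j * ∏ p, y (j p) := by
      refine Finset.sum_le_sum fun j _ => mul_le_mul_of_nonneg_left ?_ (hR i j)
      exact Finset.prod_le_prod (fun p _ => hx (j p)) (fun p _ => hxy (j p))
    have h2 := mul_le_mul_of_nonneg_left h1 hα0.le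
    simp only [hFdef]
    linarith
  -- nonnegativity
  have Fnonneg : ∀ x : Fin n → ℝ, (∀ i, 0 ≤ x i) → ∀ i, 0 ≤ F x i := by
    intro x hx i
    have h1 : 0 ≤ ∑ j, R i j * ∏ p, x (j p) :=
      Finset.sum_nonneg fun j _ =>
        mul_nonneg (hR i j) (Finset.prod_nonneg fun p _ => hx (j p))
    have h2 : (0:ℝ) ≤ 1 - α := by linarith
    have := add_nonneg (mul_nonneg hα0.le h1) (mul_nonneg h2 (hv i))
    simpa [hFdef] using this
  have hseqeq : α * s ^ m + (1 - α) = s := by linarith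
  -- the iterates
  let seq : ℕ → Fin n → ℝ := fun k => F^[k] 0
  have seq_succ : ∀ k, seq (k + 1) = F (seq k) := fun k =>
    Function.iterate_succ_apply' F k 0
  have seq_zero : seq 0 = 0 := rfl
  have seq_nonneg : ∀ k i, 0 ≤ seq k i := by
    intro k
    induction k with
    | zero => intro i; simp [seq_zero]
    | succ k ih => intro i; rw [seq_succ]; exact Fnonneg _ ih i
  have seq_mono : ∀ k i, seq k i ≤ seq (k + 1) i := by
    intro k
    induction k with
    | zero =>
      intro i
      rw [seq_succ, seq_zero]
      exact Fnonneg 0 (fun _ => le_refl 0) i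
    | succ k ih =>
      intro i
      have h := Fmono (seq k) (seq (k + 1)) (seq_nonneg k) ih i
      rw [← seq_succ k] at h
      rw [← seq_succ (k + 1)] at h
      exact h
  have seq_sum_le : ∀ k, ∑ i, seq k i ≤ s := by
    intro k
    induction k with
    | zero => simp [seq_zero]; exact hs0.le
    | succ k ih =>
      rw [seq_succ, Fsum]
      have h1 : (∑ i, seq k i) ^ m ≤ s ^ m :=
        pow_le_pow_left₀ (Finset.sum_nonneg fun i _ => seq_nonneg k i) ih m
      nlinarith
  have seq_le : ∀ k i, seq k i ≤ s := fun k i =>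
    le_trans (Finset.single_le_sum (fun i _ => seq_nonneg k i) (Finset.mem_univ i))
      (seq_sum_le k)
  -- the limit
  let x : Fin n → ℝ := fun i => ⨆ k, seq k i
  have hbdd : ∀ i, BddAbove (Set.range fun k => seq k i) := by
    intro i
    exact ⟨s, by rintro _ ⟨k, rfl⟩; exact seq_le k i⟩
  have hmono : ∀ i, Monotone fun k => seq k i := fun i =>
    monotone_nat_of_le_succ fun k => seq_mono k i
  have htend : ∀ i, Filter.Tendsto (fun k => seq k i) Filter.atTop (nhds (x i)) :=
    fun i => tendsto_atTop_ciSup (hmono i) (hbdd i)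
  have htendPi : Filter.Tendsto seq Filter.atTop (nhds x) := tendsto_pi_nhds.2 htend
  have contF : ∀ i, Continuous fun y : Fin n → ℝ => F y i := by
    intro i
    simp only [hFdef]
    exact (continuous_const.mul (continuous_finset_sum _ fun j _ =>
      continuous_const.mul (continuous_finset_prod _ fun p _ =>
        continuous_apply (j p)))).add continuous_const
  have hfix : ∀ i, F x i = x i := by
    intro i
    have h1 : Filter.Tendsto (fun k => F (seq k) i) Filter.atTop (nhds (F x i)) :=
      ((contF i).tendsto x).comp htendPi
    have h2 : Filter.Tendsto (fun k => seq (k + 1) i) Filter.atTop (nhds (x i)) :=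
      (htend i).comp (Filter.tendsto_add_atTop_nat 1)
    have heq : (fun k => F (seq k) i) = fun k => seq (k + 1) i := by
      funext k; rw [seq_succ]
    rw [heq] at h1
    exact tendsto_nhds_unique h1 h2
  have hx0 : ∀ i, 0 ≤ x i := by
    intro i
    have := le_ciSup (hbdd i) 0
    simpa [seq_zero] using this
  -- the sum of x
  have hL : (∑ i, x i) = α * (∑ i, x i) ^ m + (1 - α) := by
    rw [← Fsum x]
    exact Finset.sum_congr rfl fun i _ => (hfix i).symm
  have hLnn : 0 ≤ ∑ i, x i := Finset.sum_nonneg fun i _ => hx0 i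
  have hLpos : 0 < ∑ i, x i := by
    have := mul_nonneg hα0.le (pow_nonneg hLnn m)
    linarith
  have hLroot : α * (∑ i, x i) ^ m - (∑ i, x i) + (1 - α) = 0 := by linarith
  have hLge : s ≤ ∑ i, x i := hsmin _ hLpos hLroot
  have hLle : (∑ i, x i) ≤ s := by
    have hsumtend : Filter.Tendsto (fun k => ∑ i, seq k i) Filter.atTop
        (nhds (∑ i, x i)) := tendsto_finset_sum _ fun i _ => htend i
    exact le_of_tendsto hsumtend (Filter.Eventually.of_forall seq_sum_le)
  have hLs : (∑ i, x i) = s := le_antisymm hLle hLge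
  -- uniqueness argument
  have huniq : ∀ y : Fin n → ℝ, (∀ i, 0 ≤ y i) → (∑ i, y i = s) →
      (∀ i, y i = F y i) → y = x := by
    intro y hy0 hys hyF
    set z : Fin n → ℝ := fun i => min (y i) (x i) with hzdef
    have hz0 : ∀ i, 0 ≤ z i := fun i => le_min (hy0 i) (hx0 i)
    have hzy : ∀ i, z i ≤ y i := fun i => min_le_left _ _
    have hzx : ∀ i, z i ≤ x i := fun i => min_le_right _ _
    have hFz : ∀ i, F z i ≤ z i := by
      intro i
      refine le_min ?_ ?_
      · calc F z i ≤ F y i := Fmono z y hz0 hzy i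
          _ = y i := (hyF i).symm
      · calc F z i ≤ F x i := Fmono z x hz0 hzx i
          _ = x i := hfix i
    have hσnn : 0 ≤ ∑ i, z i := Finset.sum_nonneg fun i _ => hz0 i
    have hσle : (∑ i, z i) ≤ s := by
      rw [← hys]; exact Finset.sum_le_sum fun i _ => hzy i
    have hgσ : α * (∑ i, z i) ^ m - (∑ i, z i) + (1 - α) ≤ 0 := by
      have h1 : (∑ i, F z i) ≤ ∑ i, z i := Finset.sum_le_sum fun i _ => hFz i
      rw [Fsum] at h1
      linarith
    -- IVT: g has a root in (0, ∑ z]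
    have hGcont : Continuous fun t : ℝ => α * t ^ m - t + (1 - α) :=
      ((continuous_const.mul (continuous_pow m)).sub continuous_id).add continuous_const
    have hivt := intermediate_value_Icc' hσnn hGcont.continuousOn
    have h0mem : (0:ℝ) ∈ Set.Icc (α * (∑ i, z i) ^ m - (∑ i, z i) + (1 - α))
        (α * (0:ℝ) ^ m - 0 + (1 - α)) := by
      constructor
      · exact hgσ
      · have : (0:ℝ) ^ m = 0 := zero_pow (by omega)
        rw [this]; linarith
    obtain ⟨t, ht, hGt⟩ := hivt h0mem
    have ht0 : 0 < t := by
      rcases lt_or_eq_of_le ht.1 with h | h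
      · exact h
      · exfalso
        rw [← h] at hGt
        simp only [zero_pow (show m ≠ 0 by omega), mul_zero, sub_zero, zero_add] at hGt
        linarith
    have hst : s ≤ t := hsmin t ht0 hGt
    have hσges : s ≤ ∑ i, z i := le_trans hst ht.2
    have hσeq : (∑ i, z i) = s := le_antisymm hσle hσges
    -- z = y and z = x
    have hzy' : ∀ i ∈ Finset.univ, z i = y i := by
      rw [← Finset.sum_eq_sum_iff_of_le fun i _ => hzy i]
      rw [hσeq, hys]
    have hzx' : ∀ i ∈ Finset.univ, z i = x i := by
      rw [← Finset.sum_eq_sum_iff_of_le fun i _ => hzx i]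
      rw [hσeq, hLs]
    funext i
    rw [← hzy' i (Finset.mem_univ i), hzx' i (Finset.mem_univ i)]
  refine ⟨x, ⟨hx0, hLs, fun i => (hfix i).symm⟩, ?_⟩
  rintro y ⟨hy0, hys, hyF⟩
  exact huniq y hy0 hys (fun i => hyF i)
end

section
/- If α ∈ (0, 1/m], then the multilinear PageRank equation x = f_α(x) has exactly one stochastic solution: there is exactly one x with x ≥ 0 entrywise, Σ_i x_i = 1, and x = αR x^{⊗m} + (1−α)v. -/
open Finset Filter Topology

section MlprAux

variable {n m : ℕ}

/-- Monotonicity of the PageRank map. -/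
lemma mlpr_aux_mono (R : Matrix (Fin n) ((Fin m → Fin n)) ℝ)
    (hR : ∀ i j, 0 ≤ R i j) (v : Fin n → ℝ) (α : ℝ) (hα0 : 0 ≤ α)
    {a b : Fin n → ℝ} (ha : ∀ i, 0 ≤ a i) (hab : ∀ i, a i ≤ b i) (i : Fin n) :
    α * (∑ j, R i j * ∏ p, a (j p)) + (1 - α) * v i ≤
    α * (∑ j, R i j * ∏ p, b (j p)) + (1 - α) * v i := by
  gcongr with j _ p _
  · exact hR i j
  · exact fun p _ => ha _
  · exact hab _

/-- Sum of the PageRank map. -/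
lemma mlpr_aux_sum (R : Matrix (Fin n) ((Fin m → Fin n)) ℝ)
    (hRcol : ∀ j, ∑ i, R i j = 1)
    (v : Fin n → ℝ) (hv1 : ∑ i, v i = 1) (α : ℝ) (a : Fin n → ℝ) :
    ∑ i, (α * (∑ j, R i j * ∏ p, a (j p)) + (1 - α) * v i)
      = α * (∑ i, a i) ^ m + (1 - α) := by
  rw [Finset.sum_add_distrib, ← Finset.mul_sum, ← Finset.mul_sum, hv1, mul_one]
  congr 1
  rw [Finset.sum_comm]
  have h1 : ∀ j : Fin m → Fin n, ∑ i, R i j * ∏ p, a (j p) = ∏ p, a (j p) := by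
    intro j
    rw [← Finset.sum_mul, hRcol, one_mul]
  rw [Finset.sum_congr rfl fun j _ => h1 j]
  rw [show (∑ i, a i) ^ m = ∏ _p : Fin m, (∑ i, a i) by
    rw [Finset.prod_const, Finset.card_univ, Fintype.card_fin]]
  rw [Finset.prod_univ_sum]
  rw [Fintype.piFinset_univ]

/-- The only root of `g` in `[0,1]` is `1` when `α ≤ 1/m`. -/
lemma mlpr_aux_root (m : ℕ) (hm : 2 ≤ m) (α s : ℝ) (hα0 : 0 < α)
    (hαm : α ≤ 1 / (m : ℝ)) (hs0 : 0 ≤ s) (hs1 : s ≤ 1)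
    (heq : s = α * s ^ m + (1 - α)) : s = 1 := by
  by_contra h
  have hs1' : s < 1 := lt_of_le_of_ne hs1 h
  have hfac : (∑ k ∈ Finset.range m, s ^ k) * (s - 1) = s ^ m - 1 := geom_sum_mul s m
  have hsum_lt : (∑ k ∈ Finset.range m, s ^ k) < (m : ℝ) := by
    calc (∑ k ∈ Finset.range m, s ^ k) < ∑ _k ∈ Finset.range m, (1 : ℝ) := by
          apply Finset.sum_lt_sum
          · intro k _
            exact pow_le_one₀ hs0 hs1
          · exact ⟨1, Finset.mem_range.2 (by omega), by simpa using hs1'⟩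
      _ = (m : ℝ) := by simp
  have hm0 : (0 : ℝ) < (m : ℝ) := by positivity
  have hαm' : α * (m : ℝ) ≤ 1 := by
    rw [le_div_iff₀ hm0] at hαm
    linarith
  have hsum_nonneg : 0 ≤ (∑ k ∈ Finset.range m, s ^ k) :=
    Finset.sum_nonneg fun k _ => pow_nonneg hs0 k
  -- from heq : α * (s^m - 1) = s - 1
  have key : α * (s ^ m - 1) = s - 1 := by linarith
  rw [← hfac] at key
  have hlt : α * (∑ k ∈ Finset.range m, s ^ k) < 1 :=
    lt_of_lt_of_le (mul_lt_mul_of_pos_left hsum_lt hα0) hαm'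
  nlinarith [mul_pos (sub_pos.2 hlt) (sub_pos.2 hs1')]

end MlprAux

/-- If `α ∈ (0, 1/m]`, the multilinear PageRank equation has exactly one
stochastic solution. -/
theorem mlpr_unique_stochastic_solution_small_alpha
    (n m : ℕ) (hn : 1 ≤ n) (hm : 2 ≤ m)
    (R : Matrix (Fin n) ((Fin m → Fin n)) ℝ)
    (hR : ∀ i j, 0 ≤ R i j)
    (hRcol : ∀ j, ∑ i, R i j = 1)
    (v : Fin n → ℝ) (hv : ∀ i, 0 ≤ v i) (hv1 : ∑ i, v i = 1)
    (α : ℝ) (hα0 : 0 < α) (hα1 : α < 1) (hαm : α ≤ 1 / (m : ℝ)) :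
    ∃! x : Fin n → ℝ, (∀ i, 0 ≤ x i) ∧ (∑ i, x i = 1) ∧
      (∀ i, x i = α * (∑ j, R i j * ∏ p, x (j p)) + (1 - α) * v i) := by
  classical
  set F : (Fin n → ℝ) → (Fin n → ℝ) :=
    fun x i => α * (∑ j, R i j * ∏ p, x (j p)) + (1 - α) * v i with hFdef
  set seq : ℕ → Fin n → ℝ :=
    fun k => F^[k] (fun i => (1 - α) * v i) with hseqdef
  have hseq0 : seq 0 = fun i => (1 - α) * v i := rfl
  have hseqS : ∀ k, seq (k + 1) = F (seq k) := by
    intro k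
    simp only [hseqdef, Function.iterate_succ_apply']
  have hα0' : (0:ℝ) ≤ α := le_of_lt hα0
  have h1α : (0:ℝ) ≤ 1 - α := by linarith
  -- nonnegativity of F applied to nonneg vector
  have hFpos : ∀ a : Fin n → ℝ, (∀ i, 0 ≤ a i) → ∀ i, 0 ≤ F a i := by
    intro a ha i
    apply add_nonneg
    · apply mul_nonneg hα0'
      exact Finset.sum_nonneg fun j _ =>
        mul_nonneg (hR i j) (Finset.prod_nonneg fun p _ => ha _)
    · exact mul_nonneg h1α (hv i)
  -- basic invariants by induction
  have hinv : ∀ k, (∀ i, 0 ≤ seq k i) ∧ (∑ i, seq k i ≤ 1) ∧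
      (∀ i, seq k i ≤ seq (k + 1) i) := by
    intro k
    induction k with
    | zero =>
      refine ⟨fun i => mul_nonneg h1α (hv i), ?_, ?_⟩
      · rw [hseq0, ← Finset.mul_sum, hv1, mul_one]; linarith
      · intro i
        rw [hseqS 0, hseq0]
        have : 0 ≤ α * (∑ j, R i j * ∏ p, (fun i => (1 - α) * v i) (j p)) :=
          mul_nonneg hα0' (Finset.sum_nonneg fun j _ =>
            mul_nonneg (hR i j) (Finset.prod_nonneg fun p _ =>
              mul_nonneg h1α (hv _)))
        simp only [hFdef]
        linarith
    | succ k ih =>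
      obtain ⟨hpos, hsum, hmono⟩ := ih
      have hpos' : ∀ i, 0 ≤ seq (k + 1) i := by
        rw [hseqS]; exact hFpos _ hpos
      refine ⟨hpos', ?_, ?_⟩
      · rw [hseqS]
        have := mlpr_aux_sum R hRcol v hv1 α (seq k)
        simp only [hFdef] at this ⊢
        rw [this]
        have hpow : (∑ i, seq k i) ^ m ≤ 1 :=
          pow_le_one₀ (Finset.sum_nonneg fun i _ => hpos i) hsum
        nlinarith
      · intro i
        rw [hseqS (k+1)]
        conv_lhs => rw [hseqS k]
        exact mlpr_aux_mono R hR v α hα0' hpos hmono i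
  have hpos : ∀ k i, 0 ≤ seq k i := fun k => (hinv k).1
  have hsumle : ∀ k, ∑ i, seq k i ≤ 1 := fun k => (hinv k).2.1
  have hmono : ∀ i, Monotone fun k => seq k i := by
    intro i
    apply monotone_nat_of_le_succ
    intro k
    exact (hinv k).2.2 i
  have hbdd : ∀ i, BddAbove (Set.range fun k => seq k i) := by
    intro i
    refine ⟨1, ?_⟩
    rintro _ ⟨k, rfl⟩
    calc seq k i ≤ ∑ j, seq k j :=
          Finset.single_le_sum (fun j _ => hpos k j) (Finset.mem_univ i)
      _ ≤ 1 := hsumle k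
  set x : Fin n → ℝ := fun i => ⨆ k, seq k i with hxdef
  have hlim : ∀ i, Tendsto (fun k => seq k i) atTop (𝓝 (x i)) := by
    intro i
    exact tendsto_atTop_ciSup (hmono i) (hbdd i)
  have hx0 : ∀ i, 0 ≤ x i := by
    intro i
    exact le_trans (hpos 0 i) (le_ciSup (hbdd i) 0)
  have hseq_le_x : ∀ k i, seq k i ≤ x i := fun k i => le_ciSup (hbdd i) k
  -- x is a fixed point
  have hcont : ∀ i, Tendsto (fun k => F (seq k) i) atTop (𝓝 (F x i)) := by
    intro i
    simp only [hFdef]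
    apply Tendsto.add _ tendsto_const_nhds
    apply Tendsto.const_mul
    apply tendsto_finset_sum
    intro j _
    apply Tendsto.const_mul
    apply tendsto_finset_prod
    intro p _
    exact hlim (j p)
  have hfix : ∀ i, x i = F x i := by
    intro i
    have h1 : Tendsto (fun k => seq (k + 1) i) atTop (𝓝 (x i)) :=
      (hlim i).comp (tendsto_add_atTop_nat 1)
    have h2 : Tendsto (fun k => seq (k + 1) i) atTop (𝓝 (F x i)) := by
      simpa only [hseqS] using hcont i
    exact tendsto_nhds_unique h1 h2
  -- sum of x is 1
  have hsumlim : Tendsto (fun k => ∑ i, seq k i) atTop (𝓝 (∑ i, x i)) :=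
    tendsto_finset_sum _ fun i _ => hlim i
  have hxs1 : ∑ i, x i ≤ 1 := le_of_tendsto hsumlim (Eventually.of_forall hsumle)
  have hxs0 : 0 ≤ ∑ i, x i := Finset.sum_nonneg fun i _ => hx0 i
  have hxsum_eq : ∑ i, x i = α * (∑ i, x i) ^ m + (1 - α) := by
    calc ∑ i, x i = ∑ i, F x i := Finset.sum_congr rfl fun i _ => hfix i
      _ = α * (∑ i, x i) ^ m + (1 - α) := mlpr_aux_sum R hRcol v hv1 α x
  have hxsum : ∑ i, x i = 1 := mlpr_aux_root m hm α _ hα0 hαm hxs0 hxs1 hxsum_eq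
  refine ⟨x, ⟨hx0, hxsum, fun i => hfix i⟩, ?_⟩
  rintro y ⟨hy0, hy1, hyeq⟩
  -- every stochastic solution dominates every seq k
  have hdom : ∀ k i, seq k i ≤ y i := by
    intro k
    induction k with
    | zero =>
      intro i
      have h0 : seq 0 i = (1 - α) * v i := rfl
      have : 0 ≤ α * (∑ j, R i j * ∏ p, y (j p)) :=
        mul_nonneg hα0' (Finset.sum_nonneg fun j _ =>
          mul_nonneg (hR i j) (Finset.prod_nonneg fun p _ => hy0 _))
      rw [h0, hyeq i]
      linarith
    | succ k ih =>
      intro i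
      rw [hseqS]
      calc F (seq k) i ≤ F y i := mlpr_aux_mono R hR v α hα0' (hpos k) ih i
        _ = y i := (hyeq i).symm
  have hxley : ∀ i, x i ≤ y i := fun i => ciSup_le fun k => hdom k i
  -- equal sums force equality
  have hdiff : ∑ i, (y i - x i) = 0 := by
    rw [Finset.sum_sub_distrib, hy1, hxsum, sub_self]
  funext i
  have := (Finset.sum_eq_zero_iff_of_nonneg
    (fun i _ => sub_nonneg.2 (hxley i))).1 hdiff i (Finset.mem_univ i)
  linarith
end

section
/- Let α ∈ (0, 1/m) and let x ∈ ℝ^n be a stochastic solution of x = αR x^{⊗m} + (1−α)v (x ≥ 0 entrywise, Σ_i x_i = 1). Then the matrix αP_x − I is invertible, where I is the n×n identity matrix. -/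
open Finset

lemma mlpr_aux_sum_s13 (n m : ℕ) (x : Fin n → ℝ) (hx1 : ∑ i, x i = 1) (p : Fin m) (j : Fin n) :
    ∑ t : Fin m → Fin n, (if t p = j then ∏ q ∈ Finset.univ.erase p, x (t q) else 0) = 1 := by
  have key : ∀ t : Fin m → Fin n,
      (if t p = j then ∏ q ∈ Finset.univ.erase p, x (t q) else 0)
      = ∏ q : Fin m, (if q = p then (if t q = j then (1:ℝ) else 0) else x (t q)) := by
    intro t
    rw [← Finset.mul_prod_erase Finset.univ _ (Finset.mem_univ p)]
    rw [if_pos rfl]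
    rw [Finset.prod_congr rfl (fun q hq => if_neg (Finset.ne_of_mem_erase hq))]
    by_cases h : t p = j <;> simp [h]
  rw [Finset.sum_congr rfl (fun t _ => key t)]
  rw [← Fintype.prod_sum (f := fun q k => if q = p then (if k = j then (1:ℝ) else 0) else x k)]
  have : ∀ q : Fin m, (∑ k, if q = p then (if k = j then (1:ℝ) else 0) else x k) = 1 := by
    intro q
    by_cases h : q = p <;> simp [h, hx1]
  simp [this]

/-- If `α ∈ (0, 1/m)` and `x` is a stochastic solution of the multilinear
PageRank equation, then `α P_x - I` is invertible. -/
theorem mlpr_jacobian_invertible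
    (n m : ℕ) (hn : 1 ≤ n) (hm : 2 ≤ m)
    (R : Matrix (Fin n) ((Fin m → Fin n)) ℝ)
    (hR : ∀ i j, 0 ≤ R i j)
    (hRcol : ∀ j, ∑ i, R i j = 1)
    (v : Fin n → ℝ) (hv : ∀ i, 0 ≤ v i) (hv1 : ∑ i, v i = 1)
    (α : ℝ) (hα0 : 0 < α) (hαm : α < 1 / (m : ℝ))
    (x : Fin n → ℝ) (hx : ∀ i, 0 ≤ x i) (hx1 : ∑ i, x i = 1)
    (hsol : ∀ i, x i = α * (∑ j, R i j * ∏ p, x (j p)) + (1 - α) * v i)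
    (P : Matrix (Fin n) (Fin n) ℝ)
    (hP : ∀ i j, P i j =
      ∑ p : Fin m, ∑ t : Fin m → Fin n,
        if t p = j then R i t * ∏ q ∈ Finset.univ.erase p, x (t q) else 0) :
    IsUnit (α • P - 1) := by
  have hm0 : (0:ℝ) < m := by positivity
  have hαm' : α * m < 1 := by
    rw [lt_div_iff₀ hm0] at hαm; linarith
  -- nonnegativity of P
  have hPnn : ∀ i j, 0 ≤ P i j := by
    intro i j
    rw [hP]
    apply Finset.sum_nonneg; intro p _
    apply Finset.sum_nonneg; intro t _
    split
    · exact mul_nonneg (hR i t) (Finset.prod_nonneg fun q _ => hx _)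
    · exact le_rfl
  -- column sums of P equal m
  have hPcol : ∀ j, ∑ i, P i j = m := by
    intro j
    simp only [hP]
    have : ∀ p : Fin m, (∑ t : Fin m → Fin n, ∑ i,
        if t p = j then R i t * ∏ q ∈ Finset.univ.erase p, x (t q) else 0) = 1 := by
      intro p
      have : ∀ t : Fin m → Fin n, (∑ i,
          if t p = j then R i t * ∏ q ∈ Finset.univ.erase p, x (t q) else 0)
          = (if t p = j then ∏ q ∈ Finset.univ.erase p, x (t q) else 0) := by
        intro t
        by_cases h : t p = j
        · simp only [if_pos h, ← Finset.sum_mul, hRcol t, one_mul]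
        · simp [h]
      rw [Finset.sum_congr rfl (fun t _ => this t)]
      exact mlpr_aux_sum_s13 n m x hx1 p j
    calc ∑ i, ∑ p : Fin m, ∑ t : Fin m → Fin n,
          (if t p = j then R i t * ∏ q ∈ Finset.univ.erase p, x (t q) else 0)
        = ∑ p : Fin m, ∑ i, ∑ t : Fin m → Fin n,
          (if t p = j then R i t * ∏ q ∈ Finset.univ.erase p, x (t q) else 0) :=
          Finset.sum_comm
      _ = ∑ p : Fin m, ∑ t : Fin m → Fin n, ∑ i,
          (if t p = j then R i t * ∏ q ∈ Finset.univ.erase p, x (t q) else 0) :=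
          Finset.sum_congr rfl (fun p _ => Finset.sum_comm)
      _ = ∑ p : Fin m, (1:ℝ) := Finset.sum_congr rfl (fun p _ => this p)
      _ = m := by simp
  -- invertibility via strict diagonal dominance (columns)
  have hdet : (α • P - 1).det ≠ 0 := by
    apply det_ne_zero_of_sum_col_lt_diag
    intro k
    have hPkk : P k k ≤ m := by
      rw [← hPcol k]
      exact Finset.single_le_sum (fun i _ => hPnn i k) (Finset.mem_univ k)
    have hsum : ∑ i ∈ Finset.univ.erase k, P i k = m - P k k := by
      have := Finset.add_sum_erase Finset.univ (fun i => P i k) (Finset.mem_univ k)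
      rw [hPcol k] at this
      linarith
    have hdiag : ‖(α • P - 1) k k‖ = 1 - α * P k k := by
      have : (α • P - 1) k k = α * P k k - 1 := by
        simp [Matrix.sub_apply, Matrix.smul_apply, Matrix.one_apply, smul_eq_mul]
      rw [this, Real.norm_eq_abs, abs_of_nonpos]
      · ring
      · nlinarith [hPnn k k]
    rw [hdiag]
    have hoff : ∀ i ∈ Finset.univ.erase k, ‖(α • P - 1) i k‖ = α * P i k := by
      intro i hi
      have hik : i ≠ k := Finset.ne_of_mem_erase hi
      have : (α • P - 1) i k = α * P i k := by
        simp [Matrix.sub_apply, Matrix.smul_apply, Matrix.one_apply, hik, smul_eq_mul]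
      rw [this, Real.norm_eq_abs, abs_of_nonneg (mul_nonneg hα0.le (hPnn i k))]
    rw [Finset.sum_congr rfl hoff, ← Finset.mul_sum, hsum]
    nlinarith
  exact (Matrix.isUnit_iff_isUnit_det _).mpr (isUnit_iff_ne_zero.mpr hdet)
end

section
/- Let α = 1/m and let x ∈ ℝ^n be a strictly positive stochastic solution of x = αR x^{⊗m} + (1−α)v (x_i > 0 for all i, Σ_i x_i = 1). Then the matrix (1/m)P_x − I has rank n−1, and the row vectors w^T with w^T((1/m)P_x − I) = 0 are exactly the scalar multiples of e^T (e the all-ones vector); equivalently, the kernel of ((1/m)P_x − I)^T is the span of e. -/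
open Finset

/-- If `α = 1/m` and `x` is a strictly positive stochastic solution of the
multilinear PageRank equation, then `(1/m) P_x - I` has rank `n-1`, and the left null
vectors `w` (i.e. `wᵀ((1/m)P_x - I) = 0`) are exactly the scalar multiples of the
all-ones vector. -/
theorem mlpr_jacobian_rank_corank_one
    (n m : ℕ) (hn : 1 ≤ n) (hm : 2 ≤ m)
    (R : Matrix (Fin n) ((Fin m → Fin n)) ℝ)
    (hR : ∀ i j, 0 ≤ R i j)
    (hRcol : ∀ j, ∑ i, R i j = 1)
    (v : Fin n → ℝ) (hv : ∀ i, 0 ≤ v i) (hv1 : ∑ i, v i = 1)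
    (x : Fin n → ℝ) (hx : ∀ i, 0 < x i) (hx1 : ∑ i, x i = 1)
    (hsol : ∀ i, x i = (1 / (m : ℝ)) * (∑ j, R i j * ∏ p, x (j p))
      + (1 - 1 / (m : ℝ)) * v i)
    (P : Matrix (Fin n) (Fin n) ℝ)
    (hP : ∀ i j, P i j =
      ∑ p : Fin m, ∑ t : Fin m → Fin n,
        if t p = j then R i t * ∏ q ∈ Finset.univ.erase p, x (t q) else 0) :
    ((1 / (m : ℝ)) • P - 1).rank = n - 1 ∧
    (∀ w : Fin n → ℝ,
      Matrix.vecMul w ((1 / (m : ℝ)) • P - 1) = 0 ↔ ∃ c : ℝ, w = fun _ => c) := by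
  have hm0 : (0:ℝ) < (m:ℝ) := by exact_mod_cast (by omega : 0 < m)
  set M : Matrix (Fin n) (Fin n) ℝ := (1 / (m:ℝ)) • P with hMdef
  have hMapp : ∀ i j, M i j = (1/(m:ℝ)) * P i j := by
    intro i j; simp [hMdef]
  -- nonnegativity of M
  have hPnn : ∀ i j, 0 ≤ P i j := by
    intro i j
    rw [hP]
    refine Finset.sum_nonneg fun p _ => Finset.sum_nonneg fun t _ => ?_
    split
    · exact mul_nonneg (hR i t) (Finset.prod_nonneg fun q _ => (hx _).le)
    · exact le_refl 0
  have hMnn : ∀ i j, 0 ≤ M i j := fun i j => by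
    rw [hMapp]; exact mul_nonneg (by positivity) (hPnn i j)
  -- column sums of M are 1
  have hsum_t : ∀ (p : Fin m) (j : Fin n),
      ∑ t : Fin m → Fin n,
        (if t p = j then ∏ q ∈ Finset.univ.erase p, x (t q) else 0) = 1 := by
    intro p j
    have h1 : ∀ t : Fin m → Fin n,
        (if t p = j then ∏ q ∈ Finset.univ.erase p, x (t q) else 0)
          = ∏ q, (if q = p then (if t q = j then (1:ℝ) else 0) else x (t q)) := by
      intro t
      rw [← Finset.mul_prod_erase _ _ (Finset.mem_univ p), if_pos rfl,
        Finset.prod_congr rfl (fun q hq => if_neg (Finset.ne_of_mem_erase hq))]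
      by_cases h : t p = j <;> simp [h]
    rw [Finset.sum_congr rfl fun t _ => h1 t]
    have h2 : ∑ t : Fin m → Fin n, ∏ q, (if q = p then (if t q = j then (1:ℝ) else 0) else x (t q))
        = ∏ q : Fin m, ∑ k : Fin n, (if q = p then (if k = j then (1:ℝ) else 0) else x k) := by
      rw [Finset.prod_univ_sum (fun _ => (univ : Finset (Fin n)))
        (fun q k => if q = p then (if k = j then (1:ℝ) else 0) else x k), Fintype.piFinset_univ]
    rw [h2]
    refine Finset.prod_eq_one fun q _ => ?_
    by_cases hq : q = p <;> simp [hq, hx1]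
  have hcol : ∀ j, ∑ i, M i j = 1 := by
    intro j
    have : ∑ i, P i j = (m:ℝ) := by
      calc ∑ i, P i j
          = ∑ p : Fin m, ∑ t : Fin m → Fin n,
              (if t p = j then (∑ i, R i t) * ∏ q ∈ Finset.univ.erase p, x (t q) else 0) := by
            simp only [hP]
            rw [Finset.sum_comm]
            refine Finset.sum_congr rfl fun p _ => ?_
            rw [Finset.sum_comm]
            refine Finset.sum_congr rfl fun t _ => ?_
            by_cases h : t p = j <;> simp [h, Finset.sum_mul]
        _ = ∑ p : Fin m, ∑ t : Fin m → Fin n,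
              (if t p = j then ∏ q ∈ Finset.univ.erase p, x (t q) else 0) := by
            refine Finset.sum_congr rfl fun p _ => Finset.sum_congr rfl fun t _ => ?_
            rw [hRcol t, one_mul]
        _ = ∑ p : Fin m, (1:ℝ) := Finset.sum_congr rfl fun p _ => hsum_t p j
        _ = (m:ℝ) := by simp
    calc ∑ i, M i j = (1/(m:ℝ)) * ∑ i, P i j := by
          rw [Finset.mul_sum]; exact Finset.sum_congr rfl fun i _ => hMapp i j
      _ = 1 := by rw [this]; field_simp
  -- vanishing of M entries forces vanishing of R entries
  have hvanish : ∀ i j, M i j = 0 → ∀ t : Fin m → Fin n, ∀ p : Fin m, t p = j → R i t = 0 := by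
    intro i j hMij t p htp
    have hPij : P i j = 0 := by
      have h := hMij
      rw [hMapp] at h
      have h1m : (1/(m:ℝ)) ≠ 0 := by positivity
      exact (mul_eq_zero.mp h).resolve_left h1m
    rw [hP] at hPij
    have h1 := (Finset.sum_eq_zero_iff_of_nonneg (fun p _ =>
      Finset.sum_nonneg fun t _ => by
        split
        · exact mul_nonneg (hR i t) (Finset.prod_nonneg fun q _ => (hx _).le)
        · exact le_refl 0)).mp hPij p (Finset.mem_univ p)
    have h2 := (Finset.sum_eq_zero_iff_of_nonneg (fun t _ => by
        split
        · exact mul_nonneg (hR i t) (Finset.prod_nonneg fun q _ => (hx _).le)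
        · exact le_refl 0)).mp h1 t (Finset.mem_univ t)
    rw [if_pos htp] at h2
    have hprod : 0 < ∏ q ∈ Finset.univ.erase p, x (t q) :=
      Finset.prod_pos fun q _ => hx _
    exact (mul_eq_zero.mp h2).resolve_right (ne_of_gt hprod)
  -- fixed point propagation
  have hfix : ∀ u : Fin n → ℝ, (∀ i, 0 ≤ u i) → (∀ j, ∑ i, u i * M i j = u j) →
      ∀ i j, u j = 0 → u i ≠ 0 → M i j = 0 := by
    intro u hun hfixu i j hj hi
    have h0 : ∑ k, u k * M k j = 0 := by rw [hfixu j, hj]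
    have := (Finset.sum_eq_zero_iff_of_nonneg (fun k _ =>
      mul_nonneg (hun k) (hMnn k j))).mp h0 i (Finset.mem_univ i)
    exact (mul_eq_zero.mp this).resolve_left hi
  -- the key characterization
  have hiff : ∀ w : Fin n → ℝ,
      Matrix.vecMul w (M - 1) = 0 ↔ ∃ c : ℝ, w = fun _ => c := by
    intro w
    constructor
    · intro hw
      have hw' : ∀ j, ∑ i, w i * M i j = w j := by
        intro j
        have h := congrFun hw j
        simp only [Matrix.vecMul_sub, Matrix.vecMul_one, Pi.sub_apply, Pi.zero_apply,
          sub_eq_zero] at h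
        simpa [Matrix.vecMul, dotProduct] using h
      by_contra hc
      push_neg at hc
      obtain ⟨a, -, ha⟩ := Finset.exists_max_image (univ : Finset (Fin n)) w ⟨⟨0, hn⟩, Finset.mem_univ _⟩
      obtain ⟨b, -, hb⟩ := Finset.exists_min_image (univ : Finset (Fin n)) w ⟨⟨0, hn⟩, Finset.mem_univ _⟩
      have hba : w b < w a := by
        rcases lt_or_eq_of_le (hb a (Finset.mem_univ a)) with h | h
        · exact h
        · exact absurd (funext fun i => le_antisymm (ha i (Finset.mem_univ i))
            (h ▸ hb i (Finset.mem_univ i))) (hc (w a))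
      -- the two nonnegative fixed vectors
      set u : Fin n → ℝ := fun i => w a - w i with hu
      set u' : Fin n → ℝ := fun i => w i - w b with hu'
      have hufix : ∀ j, ∑ i, u i * M i j = u j := by
        intro j
        simp only [hu, sub_mul, Finset.sum_sub_distrib, ← Finset.mul_sum, hcol j, mul_one, hw' j]
      have hu'fix : ∀ j, ∑ i, u' i * M i j = u' j := by
        intro j
        simp only [hu', sub_mul, Finset.sum_sub_distrib, ← Finset.mul_sum, hcol j, mul_one, hw' j]
      have hunn : ∀ i, 0 ≤ u i := fun i => sub_nonneg.mpr (ha i (Finset.mem_univ i))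
      have hu'nn : ∀ i, 0 ≤ u' i := fun i => sub_nonneg.mpr (hb i (Finset.mem_univ i))
      -- the bad tuple
      set p0 : Fin m := ⟨0, by omega⟩ with hp0
      set p1 : Fin m := ⟨1, by omega⟩ with hp1
      set t : Fin m → Fin n := fun q => if q = p0 then a else b with ht
      have ht0 : t p0 = a := if_pos rfl
      have ht1 : t p1 = b := if_neg (by simp [hp0, hp1, Fin.ext_iff])
      have hzero : ∀ i, R i t = 0 := by
        intro i
        by_cases hia : w i = w a
        · refine hvanish i b ?_ t p1 ht1
          refine hfix u' hu'nn hu'fix i b (by simp [hu']) ?_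
          simp only [hu']
          rw [hia]
          exact ne_of_gt (sub_pos.mpr hba)
        · refine hvanish i a ?_ t p0 ht0
          refine hfix u hunn hufix i a (by simp [hu]) ?_
          simp only [hu]
          exact ne_of_gt (sub_pos.mpr (lt_of_le_of_ne (ha i (Finset.mem_univ i)) hia))
      have := hRcol t
      rw [Finset.sum_eq_zero fun i _ => hzero i] at this
      norm_num at this
    · rintro ⟨c, rfl⟩
      funext j
      simp only [Matrix.vecMul_sub, Matrix.vecMul_one, Pi.sub_apply, Pi.zero_apply, sub_eq_zero]
      simp [Matrix.vecMul, dotProduct, ← Finset.mul_sum, hcol j]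
  refine ⟨?_, hiff⟩
  -- rank computation
  have e0 : (fun _ : Fin n => (1:ℝ)) ≠ 0 := by
    intro h
    have := congrFun h ⟨0, hn⟩
    simp at this
  have hker : LinearMap.ker (((M - 1).transpose).mulVecLin)
      = Submodule.span ℝ {fun _ : Fin n => (1:ℝ)} := by
    ext w
    rw [LinearMap.mem_ker, Matrix.mulVecLin_apply, Matrix.mulVec_transpose,
      Submodule.mem_span_singleton, hiff w]
    constructor
    · rintro ⟨c, rfl⟩
      exact ⟨c, by funext i; simp⟩
    · rintro ⟨c, rfl⟩
      exact ⟨c, by funext i; simp⟩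
  have h1 := LinearMap.finrank_range_add_finrank_ker (((M - 1).transpose).mulVecLin)
  rw [hker, finrank_span_singleton e0, Module.finrank_fin_fun] at h1
  have h2 : (M - 1).transpose.rank + 1 = n := h1
  have h3 := Matrix.rank_transpose (M - 1)
  omega
end

section
/- Let α = 1/m and let x ∈ ℝ^n be a strictly positive stochastic solution of x = αR x^{⊗m} + (1−α)v (x_i > 0 for all i, Σ_i x_i = 1). Then the linear map w ↦ ((1/m)P_x − I)w is a bijection from Δ_0 = {w ∈ ℝ^n : Σ_i w_i = 0} onto Δ_0; in particular, if Σ_i w_i = 0 and ((1/m)P_x − I)w = 0, then w = 0. -/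
open Finset

/-- If `α = 1/m` and `x` is a strictly positive stochastic solution of the
multilinear PageRank equation, then `w ↦ ((1/m)P_x - I)w` is a bijection from the
hyperplane `Δ₀ = {w : ∑ᵢ wᵢ = 0}` onto itself; in particular its kernel intersected with
`Δ₀` is trivial. -/
theorem mlpr_jacobian_bijective_on_delta0
    (n m : ℕ) (hn : 1 ≤ n) (hm : 2 ≤ m)
    (R : Matrix (Fin n) ((Fin m → Fin n)) ℝ)
    (hR : ∀ i j, 0 ≤ R i j)
    (hRcol : ∀ j, ∑ i, R i j = 1)
    (v : Fin n → ℝ) (hv : ∀ i, 0 ≤ v i) (hv1 : ∑ i, v i = 1)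
    (x : Fin n → ℝ) (hx : ∀ i, 0 < x i) (hx1 : ∑ i, x i = 1)
    (hsol : ∀ i, x i = (1 / (m : ℝ)) * (∑ j, R i j * ∏ p, x (j p))
      + (1 - 1 / (m : ℝ)) * v i)
    (P : Matrix (Fin n) (Fin n) ℝ)
    (hP : ∀ i j, P i j =
      ∑ p : Fin m, ∑ t : Fin m → Fin n,
        if t p = j then R i t * ∏ q ∈ Finset.univ.erase p, x (t q) else 0) :
    Set.BijOn (fun w => Matrix.mulVec ((1 / (m : ℝ)) • P - 1) w)
      {w : Fin n → ℝ | ∑ i, w i = 0} {w : Fin n → ℝ | ∑ i, w i = 0} ∧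
    (∀ w : Fin n → ℝ, ∑ i, w i = 0 →
      Matrix.mulVec ((1 / (m : ℝ)) • P - 1) w = 0 → w = 0) := by
  have hm0 : (0:ℝ) < m := by
    have : (2:ℝ) ≤ m := by exact_mod_cast hm
    linarith
  have hminv : (0:ℝ) < 1 / m := by positivity
  set A : Matrix (Fin n) (Fin n) ℝ := (1 / (m : ℝ)) • P - 1 with hA
  -- entries of P are nonnegative
  have hPnn : ∀ i j, 0 ≤ P i j := by
    intro i j
    rw [hP]
    refine Finset.sum_nonneg fun p _ => Finset.sum_nonneg fun t _ => ?_
    split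
    · exact mul_nonneg (hR i t) (Finset.prod_nonneg fun q _ => (hx _).le)
    · exact le_rfl
  -- column sums of P are m
  have hPcol : ∀ j, ∑ i, P i j = m := by
    intro j
    have key : ∀ p : Fin m,
        ∑ t : Fin m → Fin n,
          (if t p = j then ∏ q ∈ Finset.univ.erase p, x (t q) else 0) = 1 := by
      intro p
      set g : Fin m → Fin n → ℝ :=
        fun q k => if q = p then (if k = j then 1 else 0) else x k with hg
      have h1 : ∀ t : Fin m → Fin n,
          (if t p = j then ∏ q ∈ Finset.univ.erase p, x (t q) else 0)
            = ∏ q, g q (t q) := by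
        intro t
        have herase : ∏ q ∈ Finset.univ.erase p, g q (t q)
            = ∏ q ∈ Finset.univ.erase p, x (t q) := by
          refine Finset.prod_congr rfl fun q hq => ?_
          simp [hg, Finset.ne_of_mem_erase hq]
        rw [← Finset.mul_prod_erase Finset.univ (fun q => g q (t q)) (Finset.mem_univ p),
          herase]
        simp [hg]
      rw [Finset.sum_congr rfl fun t _ => h1 t, ← Fintype.prod_sum]
      refine Finset.prod_eq_one fun q _ => ?_
      by_cases hq : q = p
      · simp [hg, hq]
      · simp [hg, hq, hx1]
    calc ∑ i, P i j
        = ∑ p : Fin m, ∑ t : Fin m → Fin n, ∑ i,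
            (if t p = j then R i t * ∏ q ∈ Finset.univ.erase p, x (t q) else 0) := by
          rw [Finset.sum_congr rfl fun i _ => hP i j, Finset.sum_comm]
          exact Finset.sum_congr rfl fun p _ => Finset.sum_comm
      _ = ∑ p : Fin m, ∑ t : Fin m → Fin n,
            (if t p = j then ∏ q ∈ Finset.univ.erase p, x (t q) else 0) := by
          refine Finset.sum_congr rfl fun p _ => Finset.sum_congr rfl fun t _ => ?_
          split
          · rw [← Finset.sum_mul, hRcol, one_mul]
          · simp
      _ = ∑ _p : Fin m, (1:ℝ) := Finset.sum_congr rfl fun p _ => key p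
      _ = m := by simp
  -- extraction: if P i j = 0 then R i t = 0 for any t having j in some slot
  have hextract : ∀ i j (p : Fin m) (t : Fin m → Fin n),
      t p = j → P i j = 0 → R i t = 0 := by
    intro i j p t htp hPij
    rw [hP] at hPij
    have h1 := (Finset.sum_eq_zero_iff_of_nonneg (fun p' _ =>
      Finset.sum_nonneg fun t' _ => by
        split
        · exact mul_nonneg (hR i t') (Finset.prod_nonneg fun q _ => (hx _).le)
        · exact le_rfl)).mp hPij p (Finset.mem_univ p)
    have h2 := (Finset.sum_eq_zero_iff_of_nonneg (fun t' _ => by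
        split
        · exact mul_nonneg (hR i t') (Finset.prod_nonneg fun q _ => (hx _).le)
        · exact le_rfl)).mp h1 t (Finset.mem_univ t)
    rw [if_pos htp] at h2
    have hxpos : 0 < ∏ q ∈ Finset.univ.erase p, x (t q) :=
      Finset.prod_pos fun q _ => hx _
    exact (mul_eq_zero.mp h2).resolve_right (ne_of_gt hxpos)
  -- mulVec formula
  have hmv : ∀ (w : Fin n → ℝ) i,
      Matrix.mulVec A w i = (1 / (m:ℝ)) * (∑ j, P i j * w j) - w i := by
    intro w i
    simp only [hA, Matrix.sub_mulVec, Matrix.smul_mulVec, Matrix.one_mulVec,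
      Pi.sub_apply, Pi.smul_apply, smul_eq_mul]
    congr 1
  -- the map sends everything into Δ₀
  have hA0 : ∀ w : Fin n → ℝ, ∑ i, Matrix.mulVec A w i = 0 := by
    intro w
    simp only [hmv]
    rw [Finset.sum_sub_distrib, ← Finset.mul_sum, Finset.sum_comm]
    have : ∑ j, ∑ i, P i j * w j = ∑ j, (m : ℝ) * w j := by
      refine Finset.sum_congr rfl fun j _ => ?_
      rw [← Finset.sum_mul, hPcol]
    rw [this, ← Finset.mul_sum]
    field_simp
    ring
  -- kernel is trivial on Δ₀
  have hker : ∀ w : Fin n → ℝ, ∑ i, w i = 0 → Matrix.mulVec A w = 0 → w = 0 := by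
    intro w hw0 hAw
    by_contra hw
    -- w has a strictly positive and a strictly negative entry
    have hex : ∃ a, 0 < w a := by
      by_contra h
      push_neg at h
      have : ∀ i ∈ Finset.univ, w i = 0 := fun i _ =>
        le_antisymm (h i) (by
          by_contra hneg
          push_neg at hneg
          have : ∑ i, w i < 0 := by
            refine Finset.sum_neg' (fun i _ => h i) ⟨i, Finset.mem_univ i, hneg⟩
          linarith)
      exact hw (funext fun i => this i (Finset.mem_univ i))
    have hex' : ∃ b, w b < 0 := by
      by_contra h
      push_neg at h
      have : ∀ i ∈ Finset.univ, w i = 0 := fun i _ =>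
        le_antisymm (by
          by_contra hpos
          push_neg at hpos
          have : 0 < ∑ i, w i :=
            Finset.sum_pos' (fun i _ => h i) ⟨i, Finset.mem_univ i, hpos⟩
          linarith) (h i)
      exact hw (funext fun i => this i (Finset.mem_univ i))
    obtain ⟨a, ha⟩ := hex
    obtain ⟨b, hb⟩ := hex'
    -- fixed point equation
    have hfixed : ∀ i, ∑ j, (1 / (m:ℝ)) * P i j * w j = w i := by
      intro i
      have := congrFun hAw i
      rw [hmv] at this
      have h2 : (1 / (m:ℝ)) * (∑ j, P i j * w j) = w i := by
        simpa [sub_eq_zero] using this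
      rw [← h2, Finset.mul_sum]
      exact Finset.sum_congr rfl fun j _ => mul_assoc _ _ _
    -- |w i| ≤ ∑ j (1/m) P i j |w j|
    have habs : ∀ i, |w i| ≤ ∑ j, (1 / (m:ℝ)) * P i j * |w j| := by
      intro i
      rw [← hfixed i]
      calc |∑ j, (1 / (m:ℝ)) * P i j * w j|
          ≤ ∑ j, |(1 / (m:ℝ)) * P i j * w j| := Finset.abs_sum_le_sum_abs _ _
        _ = ∑ j, (1 / (m:ℝ)) * P i j * |w j| := by
            refine Finset.sum_congr rfl fun j _ => ?_
            rw [abs_mul, abs_of_nonneg (mul_nonneg hminv.le (hPnn i j))]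
    -- total sums are equal, so pointwise equality
    have hsumeq : ∑ i, ∑ j, (1 / (m:ℝ)) * P i j * |w j| = ∑ i, |w i| := by
      rw [Finset.sum_comm]
      refine Finset.sum_congr rfl fun j _ => ?_
      have : ∑ i, (1 / (m:ℝ)) * P i j * |w j|
          = (1 / (m:ℝ)) * (∑ i, P i j) * |w j| := by
        rw [← Finset.sum_mul, ← Finset.mul_sum]
      rw [this, hPcol]
      field_simp
    have heq : ∀ i, ∑ j, (1 / (m:ℝ)) * P i j * |w j| = |w i| := by
      have hz : ∑ i, ((∑ j, (1 / (m:ℝ)) * P i j * |w j|) - |w i|) = 0 := by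
        rw [Finset.sum_sub_distrib, hsumeq, sub_self]
      have hnn : ∀ i ∈ Finset.univ,
          0 ≤ (∑ j, (1 / (m:ℝ)) * P i j * |w j|) - |w i| :=
        fun i _ => sub_nonneg.mpr (habs i)
      intro i
      have := (Finset.sum_eq_zero_iff_of_nonneg hnn).mp hz i (Finset.mem_univ i)
      linarith
    -- sign separation: entries of P vanish across sign classes
    have hsign1 : ∀ i j, w i ≤ 0 → 0 < w j → P i j = 0 := by
      intro i j hi hj
      have hzsum : ∑ j', (1 / (m:ℝ)) * P i j' * (|w j'| + w j') = 0 := by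
        rw [Finset.sum_congr rfl (fun j' _ => mul_add ((1 / (m:ℝ)) * P i j') (|w j'|) (w j')),
          Finset.sum_add_distrib, heq i, hfixed i, abs_of_nonpos hi]
        ring
      have hterm := (Finset.sum_eq_zero_iff_of_nonneg (fun j' _ =>
        mul_nonneg (mul_nonneg hminv.le (hPnn i j')) (by
          linarith [neg_abs_le (w j')]))).mp hzsum j (Finset.mem_univ j)
      have hpos : 0 < |w j| + w j := by
        rw [abs_of_pos hj]; linarith
      have := (mul_eq_zero.mp hterm).resolve_right (ne_of_gt hpos)
      rcases mul_eq_zero.mp this with h | h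
      · exact absurd h (ne_of_gt hminv)
      · exact h
    have hsign2 : ∀ i j, 0 ≤ w i → w j < 0 → P i j = 0 := by
      intro i j hi hj
      have hzsum : ∑ j', (1 / (m:ℝ)) * P i j' * (|w j'| - w j') = 0 := by
        rw [Finset.sum_congr rfl (fun j' _ => mul_sub ((1 / (m:ℝ)) * P i j') (|w j'|) (w j')),
          Finset.sum_sub_distrib, heq i, hfixed i, abs_of_nonneg hi]
        ring
      have hterm := (Finset.sum_eq_zero_iff_of_nonneg (fun j' _ =>
        mul_nonneg (mul_nonneg hminv.le (hPnn i j')) (by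
          linarith [le_abs_self (w j')]))).mp hzsum j (Finset.mem_univ j)
      have hpos : 0 < |w j| - w j := by
        rw [abs_of_neg hj]; linarith
      have := (mul_eq_zero.mp hterm).resolve_right (ne_of_gt hpos)
      rcases mul_eq_zero.mp this with h | h
      · exact absurd h (ne_of_gt hminv)
      · exact h
    -- build a tuple containing both a and b, contradiction with column sums of R
    have h01 : (0:ℕ) < m := by omega
    have h11 : (1:ℕ) < m := by omega
    set p0 : Fin m := ⟨0, h01⟩ with hp0
    set p1 : Fin m := ⟨1, h11⟩ with hp1
    have hp01 : p0 ≠ p1 := by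
      simp [hp0, hp1, Fin.ext_iff]
    set t : Fin m → Fin n := fun q => if q = p1 then b else a with ht
    have ht0 : t p0 = a := by simp [ht, hp01]
    have ht1 : t p1 = b := by simp [ht]
    have hRt : ∀ i, R i t = 0 := by
      intro i
      rcases le_or_gt (w i) 0 with hi | hi
      · exact hextract i a p0 t ht0 (hsign1 i a hi ha)
      · exact hextract i b p1 t ht1 (hsign2 i b hi.le hb)
    have : ∑ i, R i t = 0 := Finset.sum_eq_zero fun i _ => hRt i
    rw [hRcol] at this
    exact one_ne_zero this
  -- now assemble the bijection
  constructor
  · -- BijOn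
    have hmapsto : Set.MapsTo (fun w => Matrix.mulVec A w)
        {w : Fin n → ℝ | ∑ i, w i = 0} {w : Fin n → ℝ | ∑ i, w i = 0} :=
      fun w _ => hA0 w
    have hinj : Set.InjOn (fun w => Matrix.mulVec A w)
        {w : Fin n → ℝ | ∑ i, w i = 0} := by
      intro u hu v hv huv
      have hsum : ∑ i, (u - v) i = 0 := by
        simp only [Pi.sub_apply, Finset.sum_sub_distrib]
        rw [Set.mem_setOf_eq] at hu hv
        rw [hu, hv, sub_self]
      have hmv0 : Matrix.mulVec A (u - v) = 0 := by
        rw [Matrix.mulVec_sub]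
        simp only at huv
        rw [huv, sub_self]
      have := hker (u - v) hsum hmv0
      exact sub_eq_zero.mp this
    refine ⟨hmapsto, hinj, ?_⟩
    -- surjectivity via finite dimensionality
    intro y hy
    set g : (Fin n → ℝ) →ₗ[ℝ] ℝ :=
      { toFun := fun w => ∑ i, w i
        map_add' := by intro u v; simp [Finset.sum_add_distrib]
        map_smul' := by intro c u; simp [Finset.mul_sum] }
    set K := LinearMap.ker g with hK
    have hmem : ∀ w : Fin n → ℝ, w ∈ K ↔ ∑ i, w i = 0 := by
      intro w; simp [hK, LinearMap.mem_ker, g]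
    have hAK : ∀ w : Fin n → ℝ, w ∈ K → Matrix.mulVecLin A w ∈ K := by
      intro w _
      rw [hmem]
      exact hA0 w
    set f : K →ₗ[ℝ] K := (Matrix.mulVecLin A).restrict hAK with hf
    have hfinj : Function.Injective f := by
      intro u v huv
      have h1 : Matrix.mulVecLin A (u : Fin n → ℝ) = Matrix.mulVecLin A (v : Fin n → ℝ) := by
        have := congrArg (Subtype.val) huv
        simpa [hf, LinearMap.restrict_apply] using this
      have hsum : ∑ i, ((u : Fin n → ℝ) - v) i = 0 := by
        simp only [Pi.sub_apply, Finset.sum_sub_distrib]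
        rw [(hmem u).mp u.2, (hmem v).mp v.2, sub_self]
      have hmv0 : Matrix.mulVec A ((u : Fin n → ℝ) - v) = 0 := by
        have : Matrix.mulVecLin A ((u : Fin n → ℝ) - v) = 0 := by
          rw [map_sub, h1, sub_self]
        simpa [Matrix.mulVecLin_apply] using this
      have := hker _ hsum hmv0
      exact Subtype.ext (sub_eq_zero.mp this)
    have hfsurj : Function.Surjective f :=
      (LinearMap.injective_iff_surjective).mp hfinj
    obtain ⟨z, hz⟩ := hfsurj ⟨y, (hmem y).mpr hy⟩
    refine ⟨(z : Fin n → ℝ), (hmem _).mp z.2, ?_⟩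
    have := congrArg (Subtype.val) hz
    simpa [hf, LinearMap.restrict_apply, Matrix.mulVecLin_apply] using this
  · exact hker
end
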